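/- For the Dirichlet-process EPPF (a = 0, b = θ > 0), χ(e_1,...,e_m) = θ^m ∏_{k=1}^m (e_k − 1)! / ∏_{k=1}^{n}(θ + k − 1) with n = ∑ e_k, the sum of χ over all partitions of {1,...,n} equals 1, i.e., ∑_{p partition of {1,...,n}} θ^{|p|} ∏_{C ∈ p} (|C| − 1)! = ∏_{k=1}^{n}(θ + k − 1). -/

import Mathlib

noncomputable instance (n : ℕ) : Fintype (Finpartition (Finset.Icc 1 n)) :=
  Fintype.ofFinite _

open Finset

variable {α : Type*} [DecidableEq α]

namespace EwensAux

/-- Extend a partition of `s` by a new singleton `{a}`. -/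
def extSingle (a : α) {s : Finset α} (ha : a ∉ s) (p : Finpartition s) :
    Finpartition (insert a s) :=
  p.extend (b := {a}) (by simp) (by simp [Finset.disjoint_singleton_right, ha])
    (by rw [sup_comm]; ext x; simp)

lemma extSingle_parts (a : α) {s : Finset α} (ha : a ∉ s) (p : Finpartition s) :
    (extSingle a ha p).parts = insert {a} p.parts := rfl

/-- Extend a partition of `s` by adding `a` to the cell `C`. -/
def extCell (a : α) {s : Finset α} (ha : a ∉ s) (p : Finpartition s)
    (C : Finset α) (hC : C ∈ p.parts) : Finpartition (insert a s) where
  parts := insert (insert a C) (p.parts.erase C)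
  supIndep := by
    rw [Finset.supIndep_iff_pairwiseDisjoint, coe_insert]
    refine Set.PairwiseDisjoint.insert (p.disjoint.subset ?_) ?_
    · exact_mod_cast fun x hx => Finset.mem_of_mem_erase hx
    · intro D hD hne
      have hD' : D ∈ p.parts := Finset.mem_of_mem_erase hD
      have hDC : D ≠ C := Finset.ne_of_mem_erase hD
      have : Disjoint C D := p.disjoint hC hD' (Ne.symm hDC)
      rw [Finset.disjoint_left]
      intro x hx hxD
      rcases Finset.mem_insert.1 hx with rfl | hxC
      · exact ha (p.le hD' hxD)
      · exact (Finset.disjoint_left.1 this hxC) hxD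
  sup_parts := by
    have h := p.sup_parts
    rw [← Finset.insert_erase hC, Finset.sup_insert] at h
    rw [Finset.sup_insert]
    simp only [id] at h ⊢
    rw [show (insert a C) ⊔ (p.parts.erase C).sup id = insert a (C ⊔ (p.parts.erase C).sup id) from
      Finset.insert_union _ _ _, h]
  bot_notMem := by
    simp only [Finset.mem_insert, not_or, Finset.bot_eq_empty]
    constructor
    · exact fun h => by simpa using congrArg (a ∈ ·) h.symm
    · exact fun h => p.bot_notMem (Finset.mem_of_mem_erase h)

lemma extCell_parts (a : α) {s : Finset α} (ha : a ∉ s) (p : Finpartition s)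
    (C : Finset α) (hC : C ∈ p.parts) :
    (extCell a ha p C hC).parts = insert (insert a C) (p.parts.erase C) := rfl

/-- Restriction: remove `a` from a partition of `insert a s`. -/
def res (a : α) {s : Finset α} (ha : a ∉ s) (q : Finpartition (insert a s)) :
    Finpartition s :=
  (q.avoid {a}).copy (by
    rw [Finset.insert_sdiff_of_mem _ (Finset.mem_singleton_self a),
      Finset.sdiff_singleton_eq_erase, Finset.erase_eq_of_notMem ha])

lemma mem_res (a : α) {s : Finset α} (ha : a ∉ s) (q : Finpartition (insert a s))
    {c : Finset α} :
    c ∈ (res a ha q).parts ↔ ∃ d ∈ q.parts, ¬d ⊆ {a} ∧ d \ {a} = c := by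
  simp [res, Finpartition.mem_avoid, Finset.le_iff_subset]

end EwensAux

namespace EwensAux

variable {a : α} {s : Finset α}

lemma subset_singleton_ne {q : Finpartition (insert a s)} {d : Finset α}
    (hd : d ∈ q.parts) (hne : d ≠ {a}) : ¬d ⊆ {a} := by
  intro h
  rcases Finset.subset_singleton_iff.1 h with rfl | rfl
  · exact q.bot_notMem hd
  · exact hne rfl

lemma eq_singleton_of_mem {q : Finpartition (insert a s)} {d : Finset α}
    (hsing : {a} ∈ q.parts) (hd : d ∈ q.parts) (had : a ∈ d) : d = {a} :=
  q.eq_of_mem_parts hd hsing had (Finset.mem_singleton_self a)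

lemma res_parts_of_singleton (ha : a ∉ s) {q : Finpartition (insert a s)}
    (hsing : {a} ∈ q.parts) :
    (res a ha q).parts = q.parts.erase {a} := by
  ext c
  rw [mem_res, Finset.mem_erase]
  constructor
  · rintro ⟨d, hd, hd1, rfl⟩
    have had : a ∉ d := fun had => hd1 (by rw [eq_singleton_of_mem hsing hd had])
    rw [Finset.sdiff_singleton_eq_erase, Finset.erase_eq_of_notMem had]
    refine ⟨fun h => hd1 ?_, hd⟩
    rw [h]
  · rintro ⟨hne, hc⟩
    have hac : a ∉ c := fun hac => hne (eq_singleton_of_mem hsing hc hac)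
    exact ⟨c, hc, subset_singleton_ne hc hne,
      by rw [Finset.sdiff_singleton_eq_erase, Finset.erase_eq_of_notMem hac]⟩

lemma part_ne_singleton {q : Finpartition (insert a s)} (hsing : {a} ∉ q.parts) :
    q.part a ≠ {a} := by
  intro h
  exact hsing (h ▸ q.part_mem.2 (Finset.mem_insert_self a s))

lemma res_parts_of_not_singleton (ha : a ∉ s) {q : Finpartition (insert a s)}
    (hsing : {a} ∉ q.parts) :
    (res a ha q).parts = insert ((q.part a).erase a) (q.parts.erase (q.part a)) := by
  have hT : q.part a ∈ q.parts := q.part_mem.2 (Finset.mem_insert_self a s)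
  have haT : a ∈ q.part a := q.mem_part (Finset.mem_insert_self a s)
  ext c
  rw [mem_res, Finset.mem_insert, Finset.mem_erase]
  constructor
  · rintro ⟨d, hd, hd1, rfl⟩
    by_cases had : a ∈ d
    · left
      rw [q.part_eq_of_mem hd had, Finset.sdiff_singleton_eq_erase]
    · right
      rw [Finset.sdiff_singleton_eq_erase, Finset.erase_eq_of_notMem had]
      exact ⟨fun h => had (h ▸ haT), hd⟩
  · rintro (rfl | ⟨hne, hc⟩)
    · exact ⟨q.part a, hT, subset_singleton_ne hT (part_ne_singleton hsing),
        by rw [Finset.sdiff_singleton_eq_erase]⟩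
    · have hac : a ∉ c := fun hac => hne (q.part_eq_of_mem hc hac).symm
      refine ⟨c, hc, subset_singleton_ne hc ?_, ?_⟩
      · rintro rfl; exact hsing hc
      · rw [Finset.sdiff_singleton_eq_erase, Finset.erase_eq_of_notMem hac]

lemma singleton_not_mem_parts (ha : a ∉ s) (p : Finpartition s) : {a} ∉ p.parts :=
  fun h => ha (p.le h (Finset.mem_singleton_self a))

lemma res_extSingle (ha : a ∉ s) (p : Finpartition s) :
    res a ha (extSingle a ha p) = p := by
  apply Finpartition.ext
  have hsing : {a} ∈ (extSingle a ha p).parts := by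
    rw [extSingle_parts]; exact Finset.mem_insert_self _ _
  rw [res_parts_of_singleton ha hsing, extSingle_parts,
    Finset.erase_insert (singleton_not_mem_parts ha p)]

lemma insert_not_mem_erase (ha : a ∉ s) (p : Finpartition s) (C : Finset α) :
    insert a C ∉ p.parts.erase C := fun h =>
  ha (p.le (Finset.mem_of_mem_erase h) (Finset.mem_insert_self a C))

lemma extCell_singleton_not_mem (ha : a ∉ s) (p : Finpartition s)
    (C : Finset α) (hC : C ∈ p.parts) : {a} ∉ (extCell a ha p C hC).parts := by
  rw [extCell_parts, Finset.mem_insert]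
  rintro (h | h)
  · obtain ⟨b, hb⟩ := p.nonempty_of_mem_parts hC
    have hba : b ≠ a := fun hba => ha (p.le hC (hba ▸ hb))
    have : b ∈ ({a} : Finset α) := h ▸ Finset.mem_insert_of_mem hb
    exact hba (Finset.mem_singleton.1 this)
  · exact ha (p.le (Finset.mem_of_mem_erase h) (Finset.mem_singleton_self a))

lemma a_not_mem_cell (ha : a ∉ s) (p : Finpartition s) {C : Finset α}
    (hC : C ∈ p.parts) : a ∉ C := fun h => ha (p.le hC h)

lemma extCell_part_a (ha : a ∉ s) (p : Finpartition s)
    (C : Finset α) (hC : C ∈ p.parts) :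
    (extCell a ha p C hC).part a = insert a C := by
  apply Finpartition.part_eq_of_mem
  · rw [extCell_parts]; exact Finset.mem_insert_self _ _
  · exact Finset.mem_insert_self a C

lemma res_extCell (ha : a ∉ s) (p : Finpartition s)
    (C : Finset α) (hC : C ∈ p.parts) :
    res a ha (extCell a ha p C hC) = p := by
  apply Finpartition.ext
  rw [res_parts_of_not_singleton ha (extCell_singleton_not_mem ha p C hC),
    extCell_part_a ha p C hC, extCell_parts,
    Finset.erase_insert (insert_not_mem_erase ha p C),
    Finset.erase_insert (a_not_mem_cell ha p hC), Finset.insert_erase hC]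

end EwensAux

namespace EwensAux

variable {a : α} {s : Finset α}

/-- The Ewens weight of a partition. -/
noncomputable def w (θ : ℝ) {t : Finset α} (p : Finpartition t) : ℝ :=
  θ ^ p.parts.card * ∏ C ∈ p.parts, ((C.card - 1).factorial : ℝ)

lemma w_extSingle (θ : ℝ) (ha : a ∉ s) (p : Finpartition s) :
    w θ (extSingle a ha p) = θ * w θ p := by
  rw [w, w, extSingle_parts,
    Finset.card_insert_of_notMem (singleton_not_mem_parts ha p),
    Finset.prod_insert (singleton_not_mem_parts ha p)]
  simp [pow_succ]
  ring

lemma w_extCell (θ : ℝ) (ha : a ∉ s) (p : Finpartition s)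
    (C : Finset α) (hC : C ∈ p.parts) :
    w θ (extCell a ha p C hC) = C.card * w θ p := by
  have hcpos : 0 < C.card := Finset.card_pos.2 (p.nonempty_of_mem_parts hC)
  have hcard : (insert (insert a C) (p.parts.erase C)).card = p.parts.card := by
    rw [Finset.card_insert_of_notMem (insert_not_mem_erase ha p C),
      Finset.card_erase_add_one hC]
  rw [w, w, extCell_parts, hcard,
    Finset.prod_insert (insert_not_mem_erase ha p C),
    ← Finset.mul_prod_erase p.parts _ hC,
    Finset.card_insert_of_notMem (a_not_mem_cell ha p hC)]
  have : ((C.card + 1 - 1).factorial : ℝ) = C.card * (C.card - 1).factorial := by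
    rw [Nat.add_sub_cancel]
    rw [← Nat.mul_factorial_pred hcpos.ne']
    push_cast
    ring
  rw [this]
  ring

lemma extCell_inj (ha : a ∉ s) (p : Finpartition s)
    {C C' : Finset α} (hC : C ∈ p.parts) (hC' : C' ∈ p.parts)
    (h : extCell a ha p C hC = extCell a ha p C' hC') : C = C' := by
  have := congrArg (fun q : Finpartition (insert a s) => q.part a) h
  simp only [extCell_part_a] at this
  have h2 := congrArg (fun t : Finset α => t.erase a) this
  simpa [Finset.erase_insert (a_not_mem_cell ha p hC),
    Finset.erase_insert (a_not_mem_cell ha p hC')] using h2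

lemma fiber_eq (ha : a ∉ s) (p : Finpartition s) (q : Finpartition (insert a s))
    (hq : res a ha q = p) :
    q = extSingle a ha p ∨ ∃ (C : Finset α) (hC : C ∈ p.parts), q = extCell a ha p C hC := by
  by_cases hsing : {a} ∈ q.parts
  · left
    apply Finpartition.ext
    rw [extSingle_parts, ← hq, res_parts_of_singleton ha hsing,
      Finset.insert_erase hsing]
  · right
    have hT : q.part a ∈ q.parts := q.part_mem.2 (Finset.mem_insert_self a s)
    have haT : a ∈ q.part a := q.mem_part (Finset.mem_insert_self a s)
    set C := (q.part a).erase a with hCdef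
    have hCp : C ∈ p.parts := by
      rw [← hq, res_parts_of_not_singleton ha hsing]
      exact Finset.mem_insert_self _ _
    refine ⟨C, hCp, ?_⟩
    apply Finpartition.ext
    rw [extCell_parts]
    have hins : insert a C = q.part a := Finset.insert_erase haT
    have hCnotmem : C ∉ q.parts.erase (q.part a) := by
      intro h
      obtain ⟨b, hb⟩ : C.Nonempty := by
        rw [Finset.nonempty_iff_ne_empty]
        intro h0
        apply part_ne_singleton hsing
        have : q.part a ⊆ {a} := by
          intro x hx
          by_cases hxa : x = a
          · simp [hxa]
          · have hxC : x ∈ C := Finset.mem_erase.2 ⟨hxa, hx⟩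
            rw [h0] at hxC
            exact absurd hxC (Finset.notMem_empty x)
        rcases Finset.subset_singleton_iff.1 this with h' | h'
        · exact absurd (h' ▸ haT) (Finset.notMem_empty a)
        · exact h'
      have : C = q.part a :=
        q.eq_of_mem_parts (Finset.mem_of_mem_erase h) hT hb (Finset.mem_of_mem_erase hb)
      exact (Finset.ne_of_mem_erase h) this
    rw [← hq, res_parts_of_not_singleton ha hsing, ← hCdef,
      Finset.erase_insert hCnotmem, hins, Finset.insert_erase hT]

end EwensAux

namespace EwensAux

lemma step (θ : ℝ) (a : α) (s : Finset α) (ha : a ∉ s)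
    [Fintype (Finpartition (insert a s))] [Fintype (Finpartition s)] :
    ∑ q : Finpartition (insert a s), w θ q = (θ + s.card) * ∑ p : Finpartition s, w θ p := by
  classical
  rw [← Finset.sum_fiberwise (Finset.univ : Finset (Finpartition (insert a s)))
    (res a ha) (w θ), Finset.mul_sum]
  refine Finset.sum_congr rfl fun p _ => ?_
  have hfib : Finset.univ.filter (fun q => res a ha q = p) =
      insert (extSingle a ha p)
        (p.parts.attach.image fun C => extCell a ha p C.1 C.2) := by
    ext q
    simp only [Finset.mem_filter, Finset.mem_univ, true_and, Finset.mem_insert,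
      Finset.mem_image, Finset.mem_attach]
    constructor
    · intro h
      rcases fiber_eq ha p q h with h' | ⟨C, hC, h'⟩
      · exact Or.inl h'
      · exact Or.inr ⟨⟨C, hC⟩, by simp [h']⟩
    · rintro (rfl | ⟨⟨C, hC⟩, rfl⟩)
      · exact res_extSingle ha p
      · exact res_extCell ha p C hC
  have hnotmem : extSingle a ha p ∉
      p.parts.attach.image fun C => extCell a ha p C.1 C.2 := by
    simp only [Finset.mem_image, Finset.mem_attach, true_and, not_exists]
    rintro ⟨C, hC⟩ h
    have h1 : {a} ∈ (extSingle a ha p).parts := by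
      rw [extSingle_parts]; exact Finset.mem_insert_self _ _
    rw [← h] at h1
    exact extCell_singleton_not_mem ha p C hC h1
  have hinj : ∀ x ∈ p.parts.attach, ∀ y ∈ p.parts.attach,
      extCell a ha p x.1 x.2 = extCell a ha p y.1 y.2 → x = y := by
    rintro ⟨C, hC⟩ _ ⟨C', hC'⟩ _ h
    exact Subtype.ext (extCell_inj ha p hC hC' h)
  rw [hfib, Finset.sum_insert hnotmem, Finset.sum_image hinj, w_extSingle]
  have : ∀ x ∈ p.parts.attach, w θ (extCell a ha p x.1 x.2) = (x.1.card : ℝ) * w θ p :=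
    fun x _ => w_extCell θ ha p x.1 x.2
  rw [Finset.sum_congr rfl this, ← Finset.sum_mul]
  have hsum : ∑ x ∈ p.parts.attach, (x.1.card : ℝ) = (s.card : ℝ) := by
    rw [← Nat.cast_sum]
    norm_cast
    rw [Finset.sum_attach p.parts Finset.card]
    exact p.sum_card_parts
  rw [hsum]
  ring

lemma aux (θ : ℝ) :
    ∀ (s : Finset α) [Fintype (Finpartition s)],
      (∑ p : Finpartition s,
          θ ^ p.parts.card * ∏ C ∈ p.parts, ((C.card - 1).factorial : ℝ)) =
        ∏ k ∈ Finset.range s.card, (θ + (k : ℝ)) := by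
  intro s
  induction s using Finset.induction_on with
  | empty =>
    intro inst
    haveI : Unique (Finpartition (∅ : Finset α)) :=
      inferInstanceAs (Unique (Finpartition (⊥ : Finset α)))
    rw [Fintype.sum_unique]
    have h0 : (default : Finpartition (∅ : Finset α)).parts = ∅ :=
      Finpartition.parts_eq_empty_iff.2 rfl
    simp [h0]
  | @insert a s ha ih =>
    intro inst
    haveI : Fintype (Finpartition s) := Fintype.ofFinite _
    have hstep := step θ a s ha
    simp only [w] at hstep
    rw [hstep, ih, Finset.card_insert_of_notMem ha, Finset.prod_range_succ]
    ring

end EwensAux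

/-- The Ewens sampling formula EPPF (Dirichlet process, `a = 0`, `b = θ > 0`) sums to
one over all set partitions of `{1,...,n}`:
`∑_p θ^{|p|} ∏_{C ∈ p} (|C| − 1)! = θ(θ+1)⋯(θ+n−1)`. -/
theorem ewens_eppf_sums_to_one (θ : ℝ) (hθ : 0 < θ) (n : ℕ) :
    (∑ p : Finpartition (Finset.Icc 1 n),
        θ ^ p.parts.card * ∏ C ∈ p.parts, ((C.card - 1).factorial : ℝ)) =
      ∏ k ∈ Finset.range n, (θ + k) := by
  rw [EwensAux.aux θ (Finset.Icc 1 n)]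
  congr 1
  simp [Nat.card_Icc]
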